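/- Let (X,d_X), (Y,d_Y) be metric spaces with Y separable. A function f : X → Y is of Baire class 1 if and only if it is the uniform limit of a sequence of Δ⁰₂-functions, i.e. of functions g : X → Y such that g⁻¹(A) is an Fσ subset of X for every Fσ set A ⊆ Y. -/

import Mathlib

open Set Filter Topology
open scoped ENNReal

def IsFsigma {X : Type*} [TopologicalSpace X] (A : Set X) : Prop :=
  ∃ F : ℕ → Set X, (∀ n, IsClosed (F n)) ∧ A = ⋃ n, F n

lemma isFsigma_empty {X : Type*} [TopologicalSpace X] : IsFsigma (∅ : Set X) :=
  ⟨fun _ => ∅, fun _ => isClosed_empty, by simp⟩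

lemma IsClosed.isFsigma {X : Type*} [TopologicalSpace X] {A : Set X} (h : IsClosed A) :
    IsFsigma A := ⟨fun _ => A, fun _ => h, (iUnion_const A).symm⟩

lemma isFsigma_iUnion {X : Type*} [TopologicalSpace X] {A : ℕ → Set X}
    (h : ∀ n, IsFsigma (A n)) : IsFsigma (⋃ n, A n) := by
  choose F hF hA using h
  refine ⟨fun i => F (Nat.unpair i).1 (Nat.unpair i).2, fun i => hF _ _, ?_⟩
  ext x
  simp only [mem_iUnion, hA]
  constructor
  · rintro ⟨n, m, hx⟩; exact ⟨Nat.pair n m, by simpa using hx⟩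
  · rintro ⟨i, hx⟩; exact ⟨_, _, hx⟩

lemma IsFsigma.inter_closed {X : Type*} [TopologicalSpace X] {A C : Set X}
    (hA : IsFsigma A) (hC : IsClosed C) : IsFsigma (A ∩ C) := by
  obtain ⟨F, hF, rfl⟩ := hA
  exact ⟨fun n => F n ∩ C, fun n => (hF n).inter hC, by rw [iUnion_inter]⟩

lemma IsOpen.isFsigma {X : Type*} [MetricSpace X] {U : Set X} (h : IsOpen U) :
    IsFsigma U := by
  refine ⟨fun n => {x | ((n : ℝ≥0∞))⁻¹ ≤ EMetric.infEdist x Uᶜ}, fun n => ?_, ?_⟩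
  · exact isClosed_le continuous_const EMetric.continuous_infEdist
  · ext x
    simp only [mem_iUnion, mem_setOf_eq]
    constructor
    · intro hx
      have hpos : EMetric.infEdist x Uᶜ ≠ 0 := by
        intro h0
        have : x ∈ closure Uᶜ := EMetric.mem_closure_iff_infEdist_zero.2 h0
        rw [h.isClosed_compl.closure_eq] at this
        exact this hx
      obtain ⟨n, hn⟩ := ENNReal.exists_inv_nat_lt hpos
      exact ⟨n, hn.le⟩
    · rintro ⟨n, hn⟩
      by_contra hx
      have h0 : EMetric.infEdist x Uᶜ = 0 := EMetric.infEdist_zero_of_mem hx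
      rw [h0] at hn
      exact (ENNReal.inv_ne_zero.2 (ENNReal.natCast_ne_top n)) (le_antisymm hn zero_le) |>.elim

theorem baire_one_iff_uniform_limit_delta_two
    {X Y : Type*} [MetricSpace X] [MetricSpace Y] [TopologicalSpace.SeparableSpace Y]
    (f : X → Y) :
    (∀ U : Set Y, IsOpen U → IsFsigma (f ⁻¹' U)) ↔
      ∃ g : ℕ → X → Y,
        (∀ k, ∀ A : Set Y, IsFsigma A → IsFsigma (g k ⁻¹' A)) ∧
        TendstoUniformly g f atTop := by
  constructor
  · intro h
    by_cases hX : Nonempty X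
    swap
    · haveI : IsEmpty X := not_nonempty_iff.1 hX
      refine ⟨fun _ => f, fun k A _ => ?_, ?_⟩
      · rw [eq_empty_of_isEmpty (f ⁻¹' A)]; exact isFsigma_empty
      · rw [Metric.tendstoUniformly_iff]
        intro ε hε
        filter_upwards with n x
        exact absurd ⟨x⟩ hX
    haveI := hX
    haveI : Nonempty Y := ⟨f (Classical.arbitrary X)⟩
    set y : ℕ → Y := TopologicalSpace.denseSeq Y with hy_def
    have hy : DenseRange y := TopologicalSpace.denseRange_denseSeq Y
    have hball : ∀ k n : ℕ, ∃ F : ℕ → Set X, (∀ m, IsClosed (F m)) ∧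
        f ⁻¹' (Metric.ball (y n) ((k + 1 : ℝ))⁻¹) = ⋃ m, F m :=
      fun k n => h _ Metric.isOpen_ball
    choose F hFc hFU using hball
    set G : ℕ → ℕ → Set X := fun k i => F k (Nat.unpair i).1 (Nat.unpair i).2 with hG
    have hGex : ∀ k x, ∃ i, x ∈ G k i := by
      intro k x
      obtain ⟨n, hn⟩ := hy.exists_dist_lt (f x)
        (by positivity : (0 : ℝ) < ((k : ℝ) + 1)⁻¹)
      have hx : x ∈ f ⁻¹' Metric.ball (y n) ((k + 1 : ℝ))⁻¹ := by
        simpa [Metric.mem_ball] using hn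
      rw [hFU] at hx
      obtain ⟨m, hm⟩ := mem_iUnion.1 hx
      exact ⟨Nat.pair n m, by simpa [hG] using hm⟩
    classical
    set g : ℕ → X → Y := fun k x => y (Nat.unpair (Nat.find (hGex k x))).1 with hg
    set C : ℕ → ℕ → Set X := fun k i => G k i \ ⋃ j < i, G k j with hC
    have hmemC : ∀ k x i, x ∈ C k i ↔ Nat.find (hGex k x) = i := by
      intro k x i
      constructor
      · rintro ⟨hxi, hxn⟩
        rcases (Nat.find_min' (hGex k x) hxi).lt_or_eq with hlt | heq
        · exact absurd (show x ∈ ⋃ j < i, G k j from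
            mem_iUnion₂.mpr ⟨_, hlt, Nat.find_spec (hGex k x)⟩) hxn
        · exact heq
      · rintro rfl
        refine ⟨Nat.find_spec (hGex k x), ?_⟩
        intro hx
        obtain ⟨j, hj, hxj⟩ := mem_iUnion₂.1 hx
        exact Nat.find_min (hGex k x) hj hxj
    have hCfs : ∀ k i, IsFsigma (C k i) := by
      intro k i
      have hcl : IsClosed (⋃ j < i, G k j) :=
        Set.Finite.isClosed_biUnion (finite_Iio i) (fun j _ => hFc k _ _)
      have h2 := hcl.isOpen_compl.isFsigma.inter_closed
        (hFc k (Nat.unpair i).1 (Nat.unpair i).2)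
      rw [show C k i = G k i \ ⋃ j < i, G k j from rfl, Set.diff_eq, Set.inter_comm]
      exact h2
    have hpre : ∀ k (S : Set Y),
        g k ⁻¹' S = ⋃ i, if y (Nat.unpair i).1 ∈ S then C k i else ∅ := by
      intro k S
      ext x
      simp only [mem_preimage, mem_iUnion, hg]
      constructor
      · intro hx
        exact ⟨Nat.find (hGex k x), by rw [if_pos hx]; exact (hmemC k x _).2 rfl⟩
      · rintro ⟨i, hi⟩
        split_ifs at hi with hyi
        · rw [(hmemC k x i).1 hi]; exact hyi
        · exact absurd hi (notMem_empty x)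
    refine ⟨g, fun k A _ => ?_, ?_⟩
    · rw [hpre k A]
      refine isFsigma_iUnion fun i => ?_
      split_ifs
      · exact hCfs k i
      · exact isFsigma_empty
    · rw [Metric.tendstoUniformly_iff]
      intro ε hε
      obtain ⟨k₀, hk₀⟩ := exists_nat_one_div_lt hε
      filter_upwards [eventually_ge_atTop k₀] with k hk x
      have h1 : dist (f x) (g k x) < ((k : ℝ) + 1)⁻¹ := by
        have hx := Nat.find_spec (hGex k x)
        have hx2 : x ∈ f ⁻¹' Metric.ball (y (Nat.unpair (Nat.find (hGex k x))).1)
            ((k + 1 : ℝ))⁻¹ := by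
          rw [hFU]; exact mem_iUnion.2 ⟨_, hx⟩
        simpa [Metric.mem_ball, hg] using hx2
      calc dist (f x) (g k x) < ((k : ℝ) + 1)⁻¹ := h1
        _ ≤ ((k₀ : ℝ) + 1)⁻¹ := by
            apply inv_anti₀ (by positivity)
            exact_mod_cast Nat.succ_le_succ hk
        _ < ε := by rw [← one_div]; exact hk₀
  · rintro ⟨g, hg, htu⟩
    intro U hU
    rw [Metric.tendstoUniformly_iff] at htu
    have hsel : ∀ m : ℕ, ∃ k : ℕ, ∀ x, dist (f x) (g k x) < ((m : ℝ) + 1)⁻¹ := by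
      intro m
      exact ((htu _ (by positivity : (0 : ℝ) < ((m : ℝ) + 1)⁻¹)).exists)
    choose kk hkk using hsel
    set E : ℕ → Set Y := fun m => {z | ∀ w, w ∉ U → 3 * ((m : ℝ) + 1)⁻¹ ≤ dist z w}
      with hE
    have hEc : ∀ m, IsClosed (E m) := by
      intro m
      have hEq : E m = ⋂ w ∈ Uᶜ, (Metric.ball w (3 * ((m : ℝ) + 1)⁻¹))ᶜ := by
        ext z
        simp [hE, Metric.mem_ball, not_lt, dist_comm]
      rw [hEq]
      exact isClosed_biInter fun w _ => Metric.isOpen_ball.isClosed_compl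
    have key : f ⁻¹' U = ⋃ m, g (kk m) ⁻¹' (E m) := by
      ext x
      simp only [mem_preimage, mem_iUnion, hE, mem_setOf_eq]
      constructor
      · intro hx
        obtain ⟨r, hr, hball⟩ := Metric.isOpen_iff.1 hU (f x) hx
        obtain ⟨m, hm⟩ := exists_nat_one_div_lt (show (0 : ℝ) < r / 4 by linarith)
        rw [one_div] at hm
        refine ⟨m, fun w hw => ?_⟩
        have h1 : r ≤ dist (f x) w := by
          by_contra hlt
          push_neg at hlt
          exact hw (hball (by rwa [Metric.mem_ball, dist_comm]))
        have h2 : dist (f x) (g (kk m) x) < ((m : ℝ) + 1)⁻¹ := hkk m x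
        have h3 : dist (f x) w ≤ dist (f x) (g (kk m) x) + dist (g (kk m) x) w :=
          dist_triangle _ _ _
        linarith
      · rintro ⟨m, hm⟩
        by_contra hfx
        have h1 : 3 * ((m : ℝ) + 1)⁻¹ ≤ dist (g (kk m) x) (f x) := hm _ hfx
        have h2 : dist (f x) (g (kk m) x) < ((m : ℝ) + 1)⁻¹ := hkk m x
        rw [dist_comm] at h2
        have h3 : (0 : ℝ) < ((m : ℝ) + 1)⁻¹ := by positivity
        linarith
    rw [key]
    exact isFsigma_iUnion fun m => hg (kk m) _ (hEc m).isFsigma
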